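/- Let p satisfy the Aronson upper bound p(t,x,y) ≤ M t^{−1} exp(−|x−y|²/(Mt)) in dimension d = 2, and r₁(x,y) = ∫₀^∞ e^{−t} p(t,x,y) dt. Then there exists C > 0 such that r₁(x,y) ≤ C (max(log(1/|x−y|), 1)) for all x ≠ y. -/

import Mathlib

open MeasureTheory Set Real

-- key pointwise inequality: exp (-(u/t)) ≤ t/u
lemma aux_exp_le {u t : ℝ} (hu : 0 < u) (ht : 0 < t) : Real.exp (-(u / t)) ≤ t / u := by
  have h1 : 0 < u / t := div_pos hu ht
  have h2 : u / t ≤ Real.exp (u / t) := by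
    have := Real.add_one_le_exp (u / t)
    linarith
  calc Real.exp (-(u / t)) = (Real.exp (u / t))⁻¹ := Real.exp_neg _
    _ ≤ (u / t)⁻¹ := by
        exact inv_anti₀ h1 h2
    _ = t / u := by rw [inv_div]

lemma aux_main (M : ℝ) (hM : 1 ≤ M) (r : ℝ) (hr : 0 < r) :
    IntegrableOn (fun t => Real.exp (-t) * (M * t⁻¹ * Real.exp (-(r ^ 2 / M / t))))
      (Set.Ioi (0 : ℝ)) ∧
    (∫ t in Set.Ioi (0 : ℝ), Real.exp (-t) * (M * t⁻¹ * Real.exp (-(r ^ 2 / M / t)))) ≤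
      (M ^ 2 + 4 * M) * max (Real.log (1 / r)) 1 := by
  have hM0 : 0 < M := lt_of_lt_of_le one_pos hM
  set u : ℝ := r ^ 2 / M with hu
  have hu0 : 0 < u := div_pos (pow_pos hr 2) hM0
  set A : ℝ := max u 1 with hA
  have hA1 : (1 : ℝ) ≤ A := le_max_right _ _
  have hA0 : (0 : ℝ) < A := lt_of_lt_of_le one_pos hA1
  have huA : u ≤ A := le_max_left _ _
  set g : ℝ → ℝ := fun t => Real.exp (-t) * (M * t⁻¹ * Real.exp (-(u / t))) with hg
  have hgmeas : Measurable g := by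
    apply Measurable.mul
    · exact (measurable_id.neg).exp
    · exact ((measurable_const.mul measurable_inv).mul
        ((measurable_const.div measurable_id).neg.exp))
  -- bound on (0, A]
  have hbnd : ∀ t ∈ Set.Ioc (0 : ℝ) A, g t ≤ M / u := by
    intro t ht
    have ht0 : 0 < t := ht.1
    have h1 : Real.exp (-t) ≤ 1 := Real.exp_le_one_iff.2 (by linarith)
    by_cases h : t ≤ u
    · have : M * t⁻¹ * Real.exp (-(u / t)) ≤ M * t⁻¹ * (t / u) :=
        mul_le_mul_of_nonneg_left (aux_exp_le hu0 ht0)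
          (by positivity)
      have he : M * t⁻¹ * (t / u) = M / u := by
        field_simp
      calc g t ≤ 1 * (M * t⁻¹ * Real.exp (-(u / t))) :=
            mul_le_mul_of_nonneg_right h1 (by positivity)
        _ = M * t⁻¹ * Real.exp (-(u / t)) := one_mul _
        _ ≤ M * t⁻¹ * (t / u) := this
        _ = M / u := he
    · push_neg at h
      have h2 : Real.exp (-(u / t)) ≤ 1 :=
        Real.exp_le_one_iff.2 (neg_nonpos_of_nonneg (by positivity))
      have h3 : t⁻¹ ≤ u⁻¹ := inv_anti₀ hu0 h.le
      calc g t ≤ 1 * (M * t⁻¹ * 1) := by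
            apply mul_le_mul h1 _ (by positivity) zero_le_one
            exact mul_le_mul_of_nonneg_left h2 (by positivity)
        _ = M * t⁻¹ := by ring
        _ ≤ M * u⁻¹ := mul_le_mul_of_nonneg_left h3 hM0.le
        _ = M / u := (div_eq_mul_inv M u).symm
  have hgnonneg : ∀ t : ℝ, 0 < t → 0 ≤ g t := fun t ht => by
    have : 0 ≤ t⁻¹ := inv_nonneg.2 ht.le
    have := Real.exp_pos (-t)
    have := Real.exp_pos (-(u / t))
    positivity
  -- integrability on Ioc 0 A
  have hint1 : IntegrableOn g (Set.Ioc 0 A) := by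
    apply Measure.integrableOn_of_bounded (M := M / u)
    · simp [Real.volume_Ioc]
    · exact hgmeas.aestronglyMeasurable
    · exact (ae_restrict_iff' measurableSet_Ioc).2 (Filter.Eventually.of_forall
        fun t ht => by rw [Real.norm_of_nonneg (hgnonneg t ht.1)]; exact hbnd t ht)
  -- integrability on Ioi A
  have hint2 : IntegrableOn g (Set.Ioi A) := by
    apply Integrable.mono' ((exp_neg_integrableOn_Ioi A one_pos).const_mul M)
    · exact hgmeas.aestronglyMeasurable.restrict
    · apply (ae_restrict_iff' measurableSet_Ioi).2
      apply Filter.Eventually.of_forall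
      intro t ht
      rw [Real.norm_of_nonneg (hgnonneg t (lt_trans hA0 ht))]
      have ht1 : 1 ≤ t := le_trans hA1 (le_of_lt ht)
      have h2 : Real.exp (-(u / t)) ≤ 1 :=
        Real.exp_le_one_iff.2 (neg_nonpos_of_nonneg (by positivity))
      have h3 : t⁻¹ ≤ 1 := inv_le_one_of_one_le₀ ht1
      calc g t = Real.exp (-t) * (M * t⁻¹ * Real.exp (-(u / t))) := rfl
        _ ≤ Real.exp (-t) * (M * 1 * 1) := by
            apply mul_le_mul_of_nonneg_left _ (Real.exp_pos _).le
            apply mul_le_mul _ h2 (Real.exp_pos _).le (by positivity)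
            exact mul_le_mul_of_nonneg_left h3 hM0.le
        _ = M * Real.exp (-(1:ℝ) * t) := by rw [neg_one_mul]; ring
  have hIoi : Set.Ioc (0:ℝ) A ∪ Set.Ioi A = Set.Ioi 0 := Set.Ioc_union_Ioi_eq_Ioi hA0.le
  have hIoc : Set.Ioc (0:ℝ) u ∪ Set.Ioc u A = Set.Ioc 0 A := Set.Ioc_union_Ioc_eq_Ioc hu0.le huA
  have hintall : IntegrableOn g (Set.Ioi 0) := by
    rw [← hIoi]; exact hint1.union hint2
  refine ⟨hintall, ?_⟩
  -- split integral
  have hsplit1 : (∫ t in Set.Ioi (0:ℝ), g t) =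
      (∫ t in Set.Ioc (0:ℝ) A, g t) + ∫ t in Set.Ioi A, g t := by
    rw [← hIoi]
    exact setIntegral_union (Set.Ioc_disjoint_Ioi le_rfl) measurableSet_Ioi hint1 hint2
  have hsplit2 : (∫ t in Set.Ioc (0:ℝ) A, g t) =
      (∫ t in Set.Ioc (0:ℝ) u, g t) + ∫ t in Set.Ioc u A, g t := by
    rw [← hIoc]
    exact setIntegral_union (Set.Ioc_disjoint_Ioc_of_le le_rfl) measurableSet_Ioc
      (hint1.mono_set (by rw [← hIoc]; exact Set.subset_union_left))
      (hint1.mono_set (by rw [← hIoc]; exact Set.subset_union_right))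
  -- piece 1
  have hp1 : (∫ t in Set.Ioc (0:ℝ) u, g t) ≤ M := by
    have := norm_setIntegral_le_of_norm_le_const_ae' (μ := volume) (f := g)
      (s := Set.Ioc (0:ℝ) u) (C := M / u)
      (by rw [Real.volume_Ioc]; exact ENNReal.ofReal_lt_top)
      (Filter.Eventually.of_forall fun t ht => by
        rw [Real.norm_of_nonneg (hgnonneg t ht.1)]
        exact hbnd t ⟨ht.1, le_trans ht.2 huA⟩)
    calc (∫ t in Set.Ioc (0:ℝ) u, g t) ≤ ‖∫ t in Set.Ioc (0:ℝ) u, g t‖ := le_abs_self _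
      _ ≤ M / u * (volume (Set.Ioc (0:ℝ) u)).toReal := this
      _ = M / u * u := by simp [Real.volume_Ioc, ENNReal.toReal_ofReal hu0.le]
      _ = M := div_mul_cancel₀ M hu0.ne'
  -- piece 2
  have hp2 : (∫ t in Set.Ioc u A, g t) ≤ M * (Real.log A - Real.log u) := by
    have hmono : ∀ t ∈ Set.Ioc u A, g t ≤ M * t⁻¹ := by
      intro t ht
      have ht0 : 0 < t := lt_trans hu0 ht.1
      have h1 : Real.exp (-t) ≤ 1 := Real.exp_le_one_iff.2 (by linarith)
      have h2 : Real.exp (-(u / t)) ≤ 1 :=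
        Real.exp_le_one_iff.2 (neg_nonpos_of_nonneg (by positivity))
      calc g t ≤ 1 * (M * t⁻¹ * 1) := by
            apply mul_le_mul h1 (mul_le_mul_of_nonneg_left h2 (by positivity))
              (by positivity) zero_le_one
        _ = M * t⁻¹ := by ring
    have hintinv : IntegrableOn (fun t => M * t⁻¹) (Set.Ioc u A) := by
      apply Measure.integrableOn_of_bounded (M := M / u)
      · simp [Real.volume_Ioc]
      · exact (measurable_const.mul measurable_inv).aestronglyMeasurable
      · apply (ae_restrict_iff' measurableSet_Ioc).2
        apply Filter.Eventually.of_forall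
        intro t ht
        have ht0 : 0 < t := lt_trans hu0 ht.1
        rw [Real.norm_of_nonneg (by positivity)]
        rw [div_eq_mul_inv]
        exact mul_le_mul_of_nonneg_left (inv_anti₀ hu0 ht.1.le) hM0.le
    have := setIntegral_mono_on
      (hint1.mono_set (by rw [← hIoc]; exact Set.subset_union_right)) hintinv
      measurableSet_Ioc hmono
    refine le_trans this ?_
    have : (∫ t in Set.Ioc u A, M * t⁻¹) = ∫ t in u..A, M * t⁻¹ := by
      rw [intervalIntegral.integral_of_le huA]
    rw [this, intervalIntegral.integral_const_mul, integral_inv_of_pos hu0 hA0,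
      Real.log_div hA0.ne' hu0.ne']
  -- piece 3
  have hp3 : (∫ t in Set.Ioi A, g t) ≤ M := by
    have hmono : ∀ t ∈ Set.Ioi A, g t ≤ M * Real.exp (-t) := by
      intro t ht
      have ht1 : 1 ≤ t := le_trans hA1 (le_of_lt ht)
      have h2 : Real.exp (-(u / t)) ≤ 1 :=
        Real.exp_le_one_iff.2 (neg_nonpos_of_nonneg (by positivity))
      have h3 : t⁻¹ ≤ 1 := inv_le_one_of_one_le₀ ht1
      calc g t ≤ Real.exp (-t) * (M * 1 * 1) := by
            apply mul_le_mul_of_nonneg_left _ (Real.exp_pos _).le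
            apply mul_le_mul (mul_le_mul_of_nonneg_left h3 hM0.le) h2
              (Real.exp_pos _).le (by positivity)
        _ = M * Real.exp (-t) := by ring
    have hintexp : IntegrableOn (fun t => M * Real.exp (-t)) (Set.Ioi A) := by
      have := (exp_neg_integrableOn_Ioi A one_pos).const_mul M
      simp at this; exact this
    have := setIntegral_mono_on hint2 hintexp measurableSet_Ioi hmono
    refine le_trans this ?_
    rw [integral_const_mul, integral_exp_neg_Ioi]
    calc M * Real.exp (-A) ≤ M * 1 :=
        mul_le_mul_of_nonneg_left (Real.exp_le_one_iff.2 (by linarith)) hM0.le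
      _ = M := mul_one M
  -- combine
  set L : ℝ := max (Real.log (1 / r)) 1 with hL
  have hL1 : (1 : ℝ) ≤ L := le_max_right _ _
  have hlogAu : Real.log A - Real.log u ≤ Real.log M + 2 * L := by
    have hlogM : 0 ≤ Real.log M := Real.log_nonneg hM
    by_cases h : 1 ≤ u
    · have : A = u := max_eq_left h
      rw [this]
      nlinarith
    · push_neg at h
      have : A = 1 := max_eq_right h.le
      rw [this, Real.log_one]
      have hlu : Real.log u = 2 * Real.log r - Real.log M := by
        rw [hu, Real.log_div (by positivity) hM0.ne', Real.log_pow]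
        push_cast; ring
      have h1r : Real.log (1 / r) = -Real.log r := by
        rw [one_div, Real.log_inv]
      have hle : Real.log (1 / r) ≤ L := le_max_left _ _
      rw [hlu]
      nlinarith [hle, h1r]
  have hlogM : Real.log M ≤ M := le_trans (Real.log_le_sub_one_of_pos hM0) (by linarith)
  calc (∫ t in Set.Ioi (0:ℝ), g t) =
      (∫ t in Set.Ioc (0:ℝ) u, g t) + (∫ t in Set.Ioc u A, g t) + ∫ t in Set.Ioi A, g t := by
        rw [hsplit1, hsplit2]
    _ ≤ M + M * (Real.log A - Real.log u) + M := by gcongr  -- maybe fails; use add_le_add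
    _ ≤ M + M * (Real.log M + 2 * L) + M := by nlinarith [hlogAu]
    _ ≤ (M ^ 2 + 4 * M) * L := by nlinarith [hlogM, hL1, hM0]

/-- Let `p` satisfy the Aronson upper bound `p(t,x,y) ≤ M t⁻¹ exp(−|x−y|²/(M t))` in dimension
`d = 2`, and `r₁(x,y) = ∫₀^∞ e^{−t} p(t,x,y) dt`.  Then there exists `C > 0` such that
`r₁(x,y) ≤ C max (log (1/|x−y|)) 1` for all `x ≠ y`. -/
theorem stmt_12 (M : ℝ) (hM : 1 ≤ M)
    (p : ℝ → EuclideanSpace ℝ (Fin 2) → EuclideanSpace ℝ (Fin 2) → ℝ)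
    (hpos : ∀ t x y, 0 < t → 0 ≤ p t x y)
    (hbound : ∀ t x y, 0 < t →
      p t x y ≤ M * t⁻¹ * Real.exp (-‖x - y‖ ^ 2 / (M * t))) :
    ∃ C : ℝ, 0 < C ∧ ∀ x y : EuclideanSpace ℝ (Fin 2), x ≠ y →
      (∫ t in Set.Ioi (0 : ℝ), Real.exp (-t) * p t x y) ≤
        C * max (Real.log (1 / ‖x - y‖)) 1 := by
  refine ⟨M ^ 2 + 4 * M, by nlinarith, ?_⟩
  intro x y hxy
  have hr : 0 < ‖x - y‖ := norm_pos_iff.2 (sub_ne_zero.2 hxy)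
  obtain ⟨hint, hbd⟩ := aux_main M hM ‖x - y‖ hr
  refine le_trans (integral_mono_of_nonneg ?_ hint ?_) hbd
  · apply (ae_restrict_iff' measurableSet_Ioi).2
    exact Filter.Eventually.of_forall fun t ht =>
      mul_nonneg (Real.exp_pos _).le (hpos t x y (Set.mem_Ioi.1 ht))
  · apply (ae_restrict_iff' measurableSet_Ioi).2
    apply Filter.Eventually.of_forall
    intro t ht
    have h1 := hbound t x y (Set.mem_Ioi.1 ht)
    have heq : -‖x - y‖ ^ 2 / (M * t) = -(‖x - y‖ ^ 2 / M / t) := by ring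
    rw [heq] at h1
    exact mul_le_mul_of_nonneg_left h1 (Real.exp_pos _).le
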